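/- arXiv:2206.10816 — 4 statements merged into one kernel-verified Lean document; each statement's English description precedes it below -/
import Mathlib

section
/- For gradient descent on overparameterized linear regression (n < p) with step size 1, starting from θ⁽⁰⁾ = 0 and loss ½‖Xθ − Y‖², the iterate after t steps equals θ⁽ᵗ⁾ = Xᵀ [I − (I − XXᵀ)ᵗ] (XXᵀ)⁻¹ Y, assuming XXᵀ is invertible. -/
open Matrix

/-- Trajectory of gradient descent (step size 1, loss ½‖Xθ − Y‖²) for
overparameterized linear regression (`n < p`), starting from `θ 0 = 0`:
`θ t = Xᵀ [I − (I − XXᵀ)ᵗ] (XXᵀ)⁻¹ Y`. -/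
theorem overparam_gd_trajectory {n p : ℕ} (hnp : n < p)
    (X : Matrix (Fin n) (Fin p) ℝ) (Y : Fin n → ℝ)
    (hinv : IsUnit (X * Xᵀ))
    (θ : ℕ → (Fin p → ℝ))
    (h0 : θ 0 = 0)
    (hstep : ∀ k, θ (k + 1) = θ k - Xᵀ *ᵥ (X *ᵥ θ k - Y))
    (t : ℕ) :
    θ t = (Xᵀ * (1 - (1 - X * Xᵀ) ^ t) * (X * Xᵀ)⁻¹) *ᵥ Y := by
  set A := X * Xᵀ with hA
  have hAinv : A * A⁻¹ = 1 := mul_nonsing_inv A ((isUnit_iff_isUnit_det A).mp hinv)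
  induction t with
  | zero => simp [h0]
  | succ k ih =>
    set M : Matrix (Fin n) (Fin n) ℝ := (1 - (1 - A) ^ k) * A⁻¹ with hM
    have key : Xᵀ * ((1 - (1 - A) ^ (k + 1)) * A⁻¹)
        = Xᵀ * M - Xᵀ * (A * M) + Xᵀ := by
      have hMstep : (1 - (1 - A) ^ (k + 1)) * A⁻¹ = M - A * M + 1 := by
        rw [hM, pow_succ' (1 - A) k]
        have expand : (1 - (1 - A) * (1 - A) ^ k) * A⁻¹
            = A⁻¹ - (1 - A) * ((1 - A) ^ k * A⁻¹) := by noncomm_ring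
        have expand2 : (1 - (1 - A) ^ k) * A⁻¹ - A * ((1 - (1 - A) ^ k) * A⁻¹) + 1
            = A⁻¹ - (1 - A) * ((1 - A) ^ k * A⁻¹) - A * A⁻¹ + 1 := by noncomm_ring
        rw [expand, expand2, hAinv]
        noncomm_ring
      rw [hMstep, Matrix.mul_add, Matrix.mul_sub, Matrix.mul_one]
    have hXM : X * (Xᵀ * M) = A * M := by rw [hA, Matrix.mul_assoc]
    set B := Xᵀ * (1 - (1 - A) ^ k) * A⁻¹ with hB
    have hB2 : B = Xᵀ * M := by rw [hB, hM, Matrix.mul_assoc]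
    have final : Xᵀ * (1 - (1 - A) ^ (k + 1)) * A⁻¹ = B - Xᵀ * X * B + Xᵀ := by
      rw [Matrix.mul_assoc, key, hB2, Matrix.mul_assoc Xᵀ X, hXM]
    rw [hstep k, ih, final]
    simp only [Matrix.mulVec_sub, Matrix.mulVec_mulVec, Matrix.sub_mulVec, Matrix.add_mulVec]
    simp only [Matrix.mul_assoc]
    abel
end

section
/- For gradient descent on underparameterized linear regression (n > p) with step size 1, starting from θ⁽⁰⁾ = 0 and loss ½‖Xθ − Y‖², the iterate after t steps equals θ⁽ᵗ⁾ = Xᵀ [I − (I − XXᵀ)ᵗ] X (XᵀX)⁻² Xᵀ Y, assuming XᵀX is invertible. -/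
open Matrix

/-- Trajectory of gradient descent (step size 1, loss ½‖Xθ − Y‖²) for
underparameterized linear regression (`n > p`), starting from `θ 0 = 0`:
`θ t = Xᵀ [I − (I − XXᵀ)ᵗ] X (XᵀX)⁻² Xᵀ Y`. -/
theorem underparam_gd_trajectory {n p : ℕ} (hnp : n > p)
    (X : Matrix (Fin n) (Fin p) ℝ) (Y : Fin n → ℝ)
    (hinv : IsUnit (Xᵀ * X))
    (θ : ℕ → (Fin p → ℝ))
    (h0 : θ 0 = 0)
    (hstep : ∀ k, θ (k + 1) = θ k - Xᵀ *ᵥ (X *ᵥ θ k - Y))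
    (t : ℕ) :
    θ t = (Xᵀ * (1 - (1 - X * Xᵀ) ^ t) * X * ((Xᵀ * X)⁻¹ ^ 2) * Xᵀ) *ᵥ Y := by
  set A := Xᵀ * X with hA
  have hdet : IsUnit A.det := (Matrix.isUnit_iff_isUnit_det A).mp hinv
  have hAinv : A * A⁻¹ = 1 := Matrix.mul_nonsing_inv A hdet
  have hXXT : Xᵀ * (X * Xᵀ) = A * Xᵀ := by rw [← Matrix.mul_assoc, ← hA]
  -- commutation: Xᵀ (1 - XXᵀ)^k = (1 - A)^k Xᵀ
  have key : ∀ k : ℕ, Xᵀ * (1 - X * Xᵀ) ^ k = (1 - A) ^ k * Xᵀ := by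
    intro k
    induction k with
    | zero => simp
    | succ k ih =>
      rw [pow_succ, ← Matrix.mul_assoc, ih, Matrix.mul_assoc, Matrix.mul_sub,
        Matrix.mul_one, hXXT, pow_succ, Matrix.mul_assoc ((1 - A) ^ k) (1 - A) Xᵀ,
        Matrix.sub_mul, Matrix.one_mul]
  -- simplify the coefficient matrix
  have hB : ∀ k : ℕ, Xᵀ * (1 - (1 - X * Xᵀ) ^ k) * X * (A⁻¹ ^ 2) * Xᵀ
      = (1 - (1 - A) ^ k) * A⁻¹ * Xᵀ := by
    intro k
    have h1 : Xᵀ * (1 - (1 - X * Xᵀ) ^ k) = (1 - (1 - A) ^ k) * Xᵀ := by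
      rw [Matrix.mul_sub, Matrix.mul_one, key, Matrix.sub_mul, Matrix.one_mul]
    rw [h1, Matrix.mul_assoc (1 - (1 - A) ^ k) Xᵀ X, ← hA, sq,
      mul_assoc (1 - (1 - A) ^ k) A (A⁻¹ * A⁻¹), ← mul_assoc A A⁻¹ A⁻¹, hAinv, one_mul]
  rw [hB]
  induction t with
  | zero => simp [h0]
  | succ k ih =>
    have hrec : (1 - (1 - A) ^ (k + 1)) * A⁻¹ * Xᵀ
        = (1 - (1 - A) ^ k) * A⁻¹ * Xᵀ
          - (Xᵀ * (X * ((1 - (1 - A) ^ k) * A⁻¹ * Xᵀ)) - Xᵀ) := by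
      have hXD : Xᵀ * (X * ((1 - (1 - A) ^ k) * A⁻¹ * Xᵀ))
          = A * ((1 - (1 - A) ^ k) * A⁻¹ * Xᵀ) := by rw [← Matrix.mul_assoc, ← hA]
      have e1 : (1 : Matrix (Fin p) (Fin p) ℝ) - (1 - A) ^ (k + 1)
          = ((1 - A) - (1 - A) ^ (k + 1)) + A := by abel
      have e2 : (1 - A) - (1 - A) ^ (k + 1) = (1 - A) * (1 - (1 - A) ^ k) := by
        rw [mul_sub, mul_one, ← pow_succ']
      rw [hXD, e1, e2, add_mul, hAinv, mul_assoc (1 - A) (1 - (1 - A) ^ k) A⁻¹,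
        Matrix.add_mul, Matrix.one_mul,
        Matrix.mul_assoc (1 - A) ((1 - (1 - A) ^ k) * A⁻¹) Xᵀ,
        Matrix.sub_mul, Matrix.one_mul]
      abel
    rw [hstep k, ih, hrec]
    simp [Matrix.sub_mulVec, Matrix.mulVec_sub, Matrix.mulVec_mulVec, Matrix.mul_assoc]
end

section
/- The function e(x) = (1 − (1 − x)ᵗ)/x on (0,1) has derivative bounded in absolute value by t(t−1); in particular e is t²-Lipschitz on (0,1). -/
lemma e_eq_geom (t : ℕ) {y : ℝ} (hy : y ≠ 0) :
    (1 - (1 - y) ^ t) / y = ∑ k ∈ Finset.range t, (1 - y) ^ k := by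
  have h1 : (1 : ℝ) - y ≠ 1 := by intro h; apply hy; linarith [sub_eq_iff_eq_add.mp h]
  rw [geom_sum_eq h1]
  have : (1 : ℝ) - y - 1 = -y := by ring
  rw [this, div_neg]
  field_simp
  ring

lemma e_hasDerivAt (t : ℕ) {x : ℝ} (hx : x ∈ Set.Ioo (0 : ℝ) 1) :
    HasDerivAt (fun x : ℝ => (1 - (1 - x) ^ t) / x)
      (∑ k ∈ Finset.range t, (k : ℝ) * (1 - x) ^ (k - 1) * (-1)) x := by
  have hg : HasDerivAt (fun x : ℝ => ∑ k ∈ Finset.range t, (1 - x) ^ k)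
      (∑ k ∈ Finset.range t, (k : ℝ) * (1 - x) ^ (k - 1) * (-1)) x := by
    apply HasDerivAt.fun_sum
    intro k _
    exact ((hasDerivAt_id x).const_sub 1).pow k
  apply hg.congr_of_eventuallyEq
  have hmem : {y : ℝ | y ≠ 0} ∈ nhds x :=
    isOpen_ne.mem_nhds (ne_of_gt hx.1)
  filter_upwards [hmem] with y hy
  exact e_eq_geom t hy

lemma e_deriv_abs_bound (t : ℕ) (ht : 2 ≤ t) {x : ℝ} (hx : x ∈ Set.Ioo (0 : ℝ) 1) :
    |∑ k ∈ Finset.range t, (k : ℝ) * (1 - x) ^ (k - 1) * (-1)| ≤ (t : ℝ) * ((t : ℝ) - 1) := by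
  have h0 : (0 : ℝ) ≤ 1 - x := by linarith [hx.2]
  have h1 : (1 : ℝ) - x ≤ 1 := by linarith [hx.1]
  calc |∑ k ∈ Finset.range t, (k : ℝ) * (1 - x) ^ (k - 1) * (-1)|
      ≤ ∑ k ∈ Finset.range t, |(k : ℝ) * (1 - x) ^ (k - 1) * (-1)| :=
        Finset.abs_sum_le_sum_abs _ _
    _ ≤ ∑ k ∈ Finset.range t, ((t : ℝ) - 1) := by
        apply Finset.sum_le_sum
        intro k hk
        have hk' : k ≤ t - 1 := Nat.le_sub_one_of_lt (Finset.mem_range.mp hk)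
        have hkr : (k : ℝ) ≤ (t : ℝ) - 1 := by
          have : ((k : ℝ)) ≤ ((t - 1 : ℕ) : ℝ) := Nat.cast_le.mpr hk'
          rw [Nat.cast_sub (by omega)] at this
          simpa using this
        rw [abs_mul, abs_mul, abs_neg, abs_one, mul_one, abs_of_nonneg (pow_nonneg h0 _)]
        have hp : (1 - x) ^ (k - 1) ≤ 1 := pow_le_one₀ h0 h1
        calc |(k : ℝ)| * (1 - x) ^ (k - 1) ≤ |(k : ℝ)| * 1 := by
              exact mul_le_mul_of_nonneg_left hp (abs_nonneg _)
          _ = (k : ℝ) := by rw [mul_one, abs_of_nonneg (Nat.cast_nonneg _)]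
          _ ≤ (t : ℝ) - 1 := hkr
    _ = (t : ℝ) * ((t : ℝ) - 1) := by
        rw [Finset.sum_const, Finset.card_range, nsmul_eq_mul]

/-- The function `e(x) = (1 − (1 − x)ᵗ)/x` on `(0,1)` has derivative bounded in
absolute value by `t(t−1)`; in particular `e` is `t²`-Lipschitz on `(0,1)`. -/
theorem e_deriv_bound_and_lipschitz (t : ℕ) (ht : 2 ≤ t) :
    (∀ x ∈ Set.Ioo (0 : ℝ) 1,
      |deriv (fun x : ℝ => (1 - (1 - x) ^ t) / x) x| ≤ (t : ℝ) * ((t : ℝ) - 1)) ∧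
    LipschitzOnWith ((t : NNReal) ^ 2)
      (fun x : ℝ => (1 - (1 - x) ^ t) / x) (Set.Ioo (0 : ℝ) 1) := by
  constructor
  · intro x hx
    rw [(e_hasDerivAt t hx).deriv]
    exact e_deriv_abs_bound t ht hx
  · apply (convex_Ioo (0:ℝ) 1).lipschitzOnWith_of_nnnorm_hasDerivWithin_le
      (f' := fun x => ∑ k ∈ Finset.range t, (k : ℝ) * (1 - x) ^ (k - 1) * (-1))
    · intro x hx
      exact (e_hasDerivAt t hx).hasDerivWithinAt
    · intro x hx
      rw [← NNReal.coe_le_coe, coe_nnnorm, NNReal.coe_pow, NNReal.coe_natCast,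
        Real.norm_eq_abs]
      have h := e_deriv_abs_bound t ht hx
      have ht2 : (2 : ℝ) ≤ (t : ℝ) := by exact_mod_cast ht
      nlinarith
end

section
/- Let M be an n×d real matrix with n > d and singular values σ₁ ≥ … ≥ σ_d > 0, and let H = [I − (I − (λ/n)MᵀM)ᵗ](MᵀM)⁻¹Mᵀ where λ > 0 satisfies (λ/n)σ₁² ≤ 1. Then every singular value of H is at most the corresponding singular value of (MᵀM)⁻¹Mᵀ; in particular ‖H‖_F ≤ ‖(MᵀM)⁻¹Mᵀ‖_F and ‖H‖ ≤ ‖(MᵀM)⁻¹Mᵀ‖ = 1/σ_d. -/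
open Matrix
open scoped Matrix.Norms.L2Operator

private lemma gd_normE_sq {k : ℕ} (x : Fin k → ℝ) :
    ‖(WithLp.equiv 2 (Fin k → ℝ)).symm x‖ ^ 2 = x ⬝ᵥ x := by
  rw [EuclideanSpace.norm_eq, Real.sq_sqrt (by positivity)]
  simp [dotProduct, sq]

private lemma gd_dot_le {k : ℕ} (x y : Fin k → ℝ) :
    x ⬝ᵥ y ≤ ‖(WithLp.equiv 2 (Fin k → ℝ)).symm x‖ * ‖(WithLp.equiv 2 (Fin k → ℝ)).symm y‖ := by
  have := real_inner_le_norm ((WithLp.equiv 2 (Fin k → ℝ)).symm x)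
    ((WithLp.equiv 2 (Fin k → ℝ)).symm y)
  have e : inner ℝ ((WithLp.equiv 2 (Fin k → ℝ)).symm x) ((WithLp.equiv 2 (Fin k → ℝ)).symm y)
      = y ⬝ᵥ star x := EuclideanSpace.inner_toLp_toLp x y
  rwa [e, star_trivial, dotProduct_comm] at this

private lemma gd_opNorm_mulVec {m k : ℕ} (A : Matrix (Fin m) (Fin k) ℝ) (x : Fin k → ℝ) :
    ‖(WithLp.equiv 2 (Fin m → ℝ)).symm (A *ᵥ x)‖ ≤ ‖A‖ * ‖(WithLp.equiv 2 (Fin k → ℝ)).symm x‖ := by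
  have h := A.l2_opNorm_mulVec ((WithLp.equiv 2 (Fin k → ℝ)).symm x)
  simpa using h

private lemma gd_opNorm_le_bound {m k : ℕ} (A : Matrix (Fin m) (Fin k) ℝ) {C : ℝ} (hC : 0 ≤ C)
    (h : ∀ x : Fin k → ℝ, ‖(WithLp.equiv 2 (Fin m → ℝ)).symm (A *ᵥ x)‖ ≤
      C * ‖(WithLp.equiv 2 (Fin k → ℝ)).symm x‖) :
    ‖A‖ ≤ C := by
  rw [Matrix.l2_opNorm_def]
  refine ContinuousLinearMap.opNorm_le_bound _ hC fun x => ?_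
  have hx := h ((WithLp.equiv 2 (Fin k → ℝ)) x)
  simpa [LinearEquiv.trans_apply, Matrix.toEuclideanLin_apply] using hx

private lemma gd_dot_mulVec_self {m k : ℕ} (X : Matrix (Fin k) (Fin m) ℝ) (u : Fin k → ℝ) :
    u ⬝ᵥ ((X * Xᵀ) *ᵥ u) = (Xᵀ *ᵥ u) ⬝ᵥ (Xᵀ *ᵥ u) := by
  rw [← mulVec_mulVec, dotProduct_mulVec, ← mulVec_transpose]

private lemma gd_g_nonneg {a c : ℝ} (t : ℕ) (ha : 0 < a) (h2 : c * a ≤ 1) (h3 : 0 < c * a) :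
    0 ≤ a⁻¹ - (1 - (1 - c * a) ^ t) * a⁻¹ * (1 - (1 - c * a) ^ t) := by
  have hq0 : 0 ≤ (1 - c * a) ^ t := pow_nonneg (by linarith) t
  have hq1 : (1 - c * a) ^ t ≤ 1 := pow_le_one₀ (by linarith) (by linarith)
  have hinv : 0 < a⁻¹ := inv_pos.mpr ha
  have h4 : 0 ≤ 1 - (1 - (1 - c * a) ^ t) ^ 2 := by nlinarith
  nlinarith [mul_nonneg hinv.le h4]

set_option maxHeartbeats 1000000 in
/-- For `M` of full column rank (`n > d`) with singular values
`σ₁ ≥ … ≥ σ_d > 0`, and `H = [I − (I − (λ/n)MᵀM)ᵗ](MᵀM)⁻¹Mᵀ` with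
`(λ/n)σ₁² ≤ 1`, every singular value of `H` is at most the corresponding one of
`G = (MᵀM)⁻¹Mᵀ` (stated in Loewner form `HHᵀ ⪯ GGᵀ`); in particular
`‖H‖_F ≤ ‖G‖_F` and `‖H‖ ≤ ‖G‖ = 1/σ_d`. -/
theorem gd_H_singular_value_bounds {n d : ℕ} (hnd : n > d) (hn : 0 < n)
    (M : Matrix (Fin n) (Fin d) ℝ) (hM : IsUnit (Mᵀ * M))
    (σ₁ σd : ℝ) (hσd : 0 < σd)
    (hbound : ∀ v : Fin d → ℝ,
      σd * ‖(WithLp.equiv 2 (Fin d → ℝ)).symm v‖ ≤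
        ‖(WithLp.equiv 2 (Fin n → ℝ)).symm (M *ᵥ v)‖ ∧
      ‖(WithLp.equiv 2 (Fin n → ℝ)).symm (M *ᵥ v)‖ ≤
        σ₁ * ‖(WithLp.equiv 2 (Fin d → ℝ)).symm v‖)
    (hattain : ∃ v : Fin d → ℝ, v ≠ 0 ∧
      ‖(WithLp.equiv 2 (Fin n → ℝ)).symm (M *ᵥ v)‖ =
        σd * ‖(WithLp.equiv 2 (Fin d → ℝ)).symm v‖)
    (lam : ℝ) (hlam : 0 < lam) (hstep : lam / n * σ₁ ^ 2 ≤ 1) (t : ℕ)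
    (H G : Matrix (Fin d) (Fin n) ℝ)
    (hH : H = (1 - (1 - (lam / n) • (Mᵀ * M)) ^ t) * (Mᵀ * M)⁻¹ * Mᵀ)
    (hG : G = (Mᵀ * M)⁻¹ * Mᵀ) :
    (G * Gᵀ - H * Hᵀ).PosSemidef ∧
    (∑ i, ∑ j, (H i j) ^ 2) ≤ (∑ i, ∑ j, (G i j) ^ 2) ∧
    ‖H‖ ≤ ‖G‖ ∧ ‖G‖ = 1 / σd := by
  classical
  set c : ℝ := lam / n with hc
  have hc0 : 0 < c := div_pos hlam (by exact_mod_cast hn)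
  set A := Mᵀ * M with hAdef
  have hAH : A.IsHermitian := by
    rw [hAdef]
    simpa [conjTranspose_eq_transpose_of_trivial] using isHermitian_conjTranspose_mul_self M
  have hAdet : IsUnit A.det := (isUnit_iff_isUnit_det A).mp hM
  have hAinvA : A⁻¹ * A = 1 := nonsing_inv_mul A hAdet
  have hAAinv : A * A⁻¹ = 1 := mul_nonsing_inv A hAdet
  have hAt : Aᵀ = A := by
    rw [← conjTranspose_eq_transpose_of_trivial]; exact hAH
  have hAinvT : (A⁻¹)ᵀ = A⁻¹ := by rw [transpose_nonsing_inv, hAt]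
  -- eigenvalue bounds
  have hμb : ∀ i, σd ^ 2 ≤ hAH.eigenvalues i ∧ hAH.eigenvalues i ≤ σ₁ ^ 2 := by
    intro i
    have h := hAH.eigenvalues_eq i
    simp only [RCLike.re_to_real, star_trivial] at h
    set v : Fin d → ℝ := (WithLp.equiv 2 (Fin d → ℝ)) (hAH.eigenvectorBasis i) with hv
    have hdot : hAH.eigenvalues i = (M *ᵥ v) ⬝ᵥ (M *ᵥ v) := by
      rw [h]; change v ⬝ᵥ A *ᵥ v = _
      rw [hAdef, ← mulVec_mulVec, dotProduct_mulVec, ← mulVec_transpose, transpose_transpose]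
    have hnv : ‖(WithLp.equiv 2 (Fin d → ℝ)).symm v‖ = 1 := by
      rw [hv, Equiv.symm_apply_apply]
      have := hAH.eigenvectorBasis.orthonormal.1 i
      simpa using this
    have hMv : hAH.eigenvalues i = ‖(WithLp.equiv 2 (Fin n → ℝ)).symm (M *ᵥ v)‖ ^ 2 := by
      rw [gd_normE_sq, hdot]
    obtain ⟨h1, h2⟩ := hbound v
    rw [hnv, mul_one] at h1 h2
    constructor
    · rw [hMv]; nlinarith
    · rw [hMv]; nlinarith [norm_nonneg ((WithLp.equiv 2 (Fin n → ℝ)).symm (M *ᵥ v))]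
  have hμpos : ∀ i, 0 < hAH.eigenvalues i :=
    fun i => lt_of_lt_of_le (by positivity) (hμb i).1
  have hcμ : ∀ i, c * hAH.eigenvalues i ≤ 1 := by
    intro i
    have := (hμb i).2
    nlinarith
  set μ := hAH.eigenvalues with hμdef
  -- spectral machinery
  set U := (hAH.eigenvectorUnitary : Matrix (Fin d) (Fin d) ℝ) with hUdef
  have hU1 : star U * U = 1 := Unitary.coe_star_mul_self _
  have hU2 : U * star U = 1 := Unitary.coe_mul_star_self _
  have spec : A = U * diagonal μ * star U := by simpa using hAH.spectral_theorem
  have conj_mul : ∀ f g : Fin d → ℝ, (U * diagonal f * star U) * (U * diagonal g * star U)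
      = U * diagonal (fun i => f i * g i) * star U := by
    intro f g
    have h1 : (U * diagonal f * star U) * (U * diagonal g * star U)
        = U * (diagonal f * ((star U * U) * (diagonal g * star U))) := by
      simp only [Matrix.mul_assoc]
    rw [h1, hU1, Matrix.one_mul, ← Matrix.mul_assoc (diagonal f) (diagonal g) (star U),
      diagonal_mul_diagonal, ← Matrix.mul_assoc]
  have conj_one : U * diagonal (fun _ : Fin d => (1 : ℝ)) * star U = 1 := by
    rw [show (diagonal (fun _ : Fin d => (1:ℝ))) = 1 from diagonal_one, Matrix.mul_one, hU2]
  have conj_sub : ∀ f g : Fin d → ℝ, (U * diagonal f * star U) - (U * diagonal g * star U)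
      = U * diagonal (fun i => f i - g i) * star U := by
    intro f g
    rw [← diagonal_sub, Matrix.mul_sub, Matrix.sub_mul]
  have conj_pow : ∀ (f : Fin d → ℝ) (k : ℕ),
      (U * diagonal f * star U) ^ k = U * diagonal (fun i => f i ^ k) * star U := by
    intro f k
    induction k with
    | zero => simp [conj_one, hU2]
    | succ m ih =>
        rw [pow_succ, ih, conj_mul]
        simp [pow_succ]
  have hAinv_eq : A⁻¹ = U * diagonal (fun i => (μ i)⁻¹) * star U := by
    apply inv_eq_left_inv
    rw [spec, conj_mul]
    have he : (fun i => (μ i)⁻¹ * μ i) = fun _ : Fin d => (1:ℝ) := by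
      funext i; exact inv_mul_cancel₀ (hμpos i).ne'
    rw [he, conj_one]
  have hsm : c • diagonal μ = diagonal (fun i => c * μ i) := by
    rw [← diagonal_smul]; rfl
  have h2 : c • A = U * diagonal (fun i => c * μ i) * star U := by
    rw [spec, ← hsm, Matrix.mul_smul, Matrix.smul_mul]
  have hQ : (1 : Matrix (Fin d) (Fin d) ℝ) - c • A
      = U * diagonal (fun i => 1 - c * μ i) * star U := by
    rw [h2, ← conj_one, conj_sub]
  have hK : ((1 : Matrix (Fin d) (Fin d) ℝ) - c • A) ^ t
      = U * diagonal (fun i => (1 - c * μ i) ^ t) * star U := by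
    rw [hQ, conj_pow]
  have h1K : (1 : Matrix (Fin d) (Fin d) ℝ) - ((1 : Matrix (Fin d) (Fin d) ℝ) - c • A) ^ t
      = U * diagonal (fun i => 1 - (1 - c * μ i) ^ t) * star U := by
    rw [hK, ← conj_one, conj_sub]
  set K := ((1 : Matrix (Fin d) (Fin d) ℝ) - c • A) ^ t with hKdef
  have hKsymm : ((1 : Matrix (Fin d) (Fin d) ℝ) - K)ᵀ = 1 - K := by
    rw [transpose_sub, transpose_one, hKdef, transpose_pow, transpose_sub, transpose_one,
      transpose_smul, hAt]
  -- G Gᵀ and H Hᵀ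
  have hGG : G * Gᵀ = A⁻¹ := by
    rw [hG, transpose_mul, transpose_transpose, hAinvT]
    calc A⁻¹ * Mᵀ * (M * A⁻¹)
        = A⁻¹ * (Mᵀ * M) * A⁻¹ := by simp only [Matrix.mul_assoc]
      _ = A⁻¹ * A * A⁻¹ := by rw [← hAdef]
      _ = A⁻¹ := by rw [hAinvA, Matrix.one_mul]
  have hHH : H * Hᵀ = (1 - K) * A⁻¹ * (1 - K) := by
    rw [hH, transpose_mul, transpose_mul, transpose_transpose, hAinvT, hKsymm]
    calc (1 - K) * A⁻¹ * Mᵀ * (M * (A⁻¹ * (1 - K)))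
        = (1 - K) * (A⁻¹ * ((Mᵀ * M) * (A⁻¹ * (1 - K)))) := by simp only [Matrix.mul_assoc]
      _ = (1 - K) * (A⁻¹ * (A * (A⁻¹ * (1 - K)))) := by rw [← hAdef]
      _ = (1 - K) * A⁻¹ * (1 - K) := by
          rw [← Matrix.mul_assoc A, hAAinv, Matrix.one_mul]
          simp only [Matrix.mul_assoc]
  have hD : G * Gᵀ - H * Hᵀ = U * diagonal
      (fun i => (μ i)⁻¹ - (1 - (1 - c * μ i) ^ t) * (μ i)⁻¹ * (1 - (1 - c * μ i) ^ t))
      * star U := by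
    rw [hGG, hHH, h1K, hAinv_eq, conj_mul, conj_mul, conj_sub]
  have hgnn : ∀ i, 0 ≤ (μ i)⁻¹ -
      (1 - (1 - c * μ i) ^ t) * (μ i)⁻¹ * (1 - (1 - c * μ i) ^ t) :=
    fun i => gd_g_nonneg t (hμpos i) (hcμ i) (mul_pos hc0 (hμpos i))
  have hPSD : (G * Gᵀ - H * Hᵀ).PosSemidef := by
    rw [hD]
    exact (PosSemidef.diagonal (fun i => hgnn i)).mul_mul_conjTranspose_same U
  refine ⟨hPSD, ?_, ?_, ?_⟩
  · -- Frobenius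
    have hdiag : ∀ i, 0 ≤ (G * Gᵀ - H * Hᵀ) i i := by
      intro i
      have h := hPSD.dotProduct_mulVec_nonneg (Pi.single i 1)
      simpa [dotProduct, mulVec, Pi.single_apply, mul_comm] using h
    have hsum : ∀ (X : Matrix (Fin d) (Fin n) ℝ), ∑ i, (X * Xᵀ) i i = ∑ i, ∑ j, X i j ^ 2 := by
      intro X
      simp [mul_apply, sq]
    have h0 : 0 ≤ ∑ i, (G * Gᵀ - H * Hᵀ) i i :=
      Finset.sum_nonneg fun i _ => hdiag i
    have hsplit : ∑ i, (G * Gᵀ - H * Hᵀ) i i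
        = (∑ i, (G * Gᵀ) i i) - ∑ i, (H * Hᵀ) i i := by
      simp [Matrix.sub_apply, Finset.sum_sub_distrib]
    rw [hsplit, hsum, hsum] at h0
    linarith
  · -- operator norm
    have hHnorm : ‖H‖ = ‖Hᵀ‖ := by
      rw [← conjTranspose_eq_transpose_of_trivial, l2_opNorm_conjTranspose]
    rw [hHnorm]
    apply gd_opNorm_le_bound Hᵀ (norm_nonneg G)
    intro u
    have hpsd := hPSD.dotProduct_mulVec_nonneg u
    rw [star_trivial] at hpsd
    have hsubd : u ⬝ᵥ ((G * Gᵀ - H * Hᵀ) *ᵥ u)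
        = u ⬝ᵥ ((G * Gᵀ) *ᵥ u) - u ⬝ᵥ ((H * Hᵀ) *ᵥ u) := by
      rw [Matrix.sub_mulVec, dotProduct_sub]
    rw [hsubd] at hpsd
    have hGnorm : ‖Gᵀ‖ = ‖G‖ := by
      rw [← conjTranspose_eq_transpose_of_trivial, l2_opNorm_conjTranspose]
    have hGv : ‖(WithLp.equiv 2 (Fin n → ℝ)).symm (Gᵀ *ᵥ u)‖ ≤
        ‖G‖ * ‖(WithLp.equiv 2 (Fin d → ℝ)).symm u‖ := by
      rw [← hGnorm]; exact gd_opNorm_mulVec Gᵀ u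
    have hsq : ‖(WithLp.equiv 2 (Fin n → ℝ)).symm (Hᵀ *ᵥ u)‖ ^ 2
        ≤ (‖G‖ * ‖(WithLp.equiv 2 (Fin d → ℝ)).symm u‖) ^ 2 := by
      rw [gd_normE_sq, ← gd_dot_mulVec_self]
      have hG2 : u ⬝ᵥ ((G * Gᵀ) *ᵥ u)
          ≤ (‖G‖ * ‖(WithLp.equiv 2 (Fin d → ℝ)).symm u‖) ^ 2 := by
        rw [gd_dot_mulVec_self, ← gd_normE_sq]
        have h1 : (0:ℝ) ≤ ‖(WithLp.equiv 2 (Fin n → ℝ)).symm (Gᵀ *ᵥ u)‖ := norm_nonneg _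
        nlinarith
      linarith
    have h1 : (0:ℝ) ≤ ‖(WithLp.equiv 2 (Fin n → ℝ)).symm (Hᵀ *ᵥ u)‖ := norm_nonneg _
    have h2 : (0:ℝ) ≤ ‖G‖ * ‖(WithLp.equiv 2 (Fin d → ℝ)).symm u‖ :=
      mul_nonneg (norm_nonneg _) (norm_nonneg _)
    nlinarith
  · -- ‖G‖ = 1/σd
    have hGnorm : ‖Gᵀ‖ = ‖G‖ := by
      rw [← conjTranspose_eq_transpose_of_trivial, l2_opNorm_conjTranspose]
    have hGT : Gᵀ = M * A⁻¹ := by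
      rw [hG, transpose_mul, transpose_transpose, hAinvT]
    -- upper bound
    have hupper : ‖G‖ ≤ 1 / σd := by
      rw [← hGnorm]
      apply gd_opNorm_le_bound Gᵀ (by positivity)
      intro v
      rw [hGT]
      have hMV : (M * A⁻¹) *ᵥ v = M *ᵥ (A⁻¹ *ᵥ v) := by rw [mulVec_mulVec]
      rw [hMV]
      set w := A⁻¹ *ᵥ v with hw
      have hAw : A *ᵥ w = v := by
        rw [hw, mulVec_mulVec, hAAinv, one_mulVec]
      have hdot : (M *ᵥ w) ⬝ᵥ (M *ᵥ w) = w ⬝ᵥ v := by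
        rw [dotProduct_mulVec, ← mulVec_transpose, mulVec_mulVec, ← hAdef, hAw]
        exact dotProduct_comm v w
      have hsq : ‖(WithLp.equiv 2 (Fin n → ℝ)).symm (M *ᵥ w)‖ ^ 2
          = w ⬝ᵥ v := by rw [gd_normE_sq, hdot]
      have hcs : w ⬝ᵥ v ≤ ‖(WithLp.equiv 2 (Fin d → ℝ)).symm w‖ *
          ‖(WithLp.equiv 2 (Fin d → ℝ)).symm v‖ := gd_dot_le w v
      have hlow := (hbound w).1
      set s := ‖(WithLp.equiv 2 (Fin n → ℝ)).symm (M *ᵥ w)‖ with hs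
      set a := ‖(WithLp.equiv 2 (Fin d → ℝ)).symm w‖ with ha
      set b := ‖(WithLp.equiv 2 (Fin d → ℝ)).symm v‖ with hb
      have hs0 : 0 ≤ s := norm_nonneg _
      have hb0 : 0 ≤ b := norm_nonneg _
      rcases eq_or_lt_of_le hs0 with h|h
      · rw [← h]; positivity
      · rw [one_div, inv_mul_eq_div, le_div_iff₀ hσd]
        nlinarith
    -- lower bound
    obtain ⟨v₀, hv₀ne, hv₀⟩ := hattain
    have hBpsd : (A - σd ^ 2 • (1 : Matrix (Fin d) (Fin d) ℝ)).PosSemidef := by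
      refine PosSemidef.of_dotProduct_mulVec_nonneg ?_ ?_
      · show (A - σd ^ 2 • 1)ᴴ = _
        simp [conjTranspose_sub, conjTranspose_smul, hAH.eq, hAt]
      · intro x
        rw [star_trivial, Matrix.sub_mulVec, dotProduct_sub, smul_mulVec, one_mulVec,
          dotProduct_smul]
        have hdx : x ⬝ᵥ (A *ᵥ x) = (M *ᵥ x) ⬝ᵥ (M *ᵥ x) := by
          rw [hAdef, ← mulVec_mulVec, dotProduct_mulVec, ← mulVec_transpose, transpose_transpose]
        rw [hdx]
        have h1 := (hbound x).1
        have h2 : (M *ᵥ x) ⬝ᵥ (M *ᵥ x)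
            = ‖(WithLp.equiv 2 (Fin n → ℝ)).symm (M *ᵥ x)‖ ^ 2 := (gd_normE_sq _).symm
        have h3 : x ⬝ᵥ x = ‖(WithLp.equiv 2 (Fin d → ℝ)).symm x‖ ^ 2 := (gd_normE_sq _).symm
        rw [h2, smul_eq_mul, h3]
        have hx0 : 0 ≤ σd * ‖(WithLp.equiv 2 (Fin d → ℝ)).symm x‖ := by positivity
        have hsq2 := mul_le_mul h1 h1 hx0 (norm_nonneg _)
        nlinarith [hsq2]
    have hquad : v₀ ⬝ᵥ ((A - σd ^ 2 • (1 : Matrix (Fin d) (Fin d) ℝ)) *ᵥ v₀) = 0 := by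
      rw [Matrix.sub_mulVec, dotProduct_sub, smul_mulVec, one_mulVec, dotProduct_smul]
      have hdx : v₀ ⬝ᵥ (A *ᵥ v₀) = (M *ᵥ v₀) ⬝ᵥ (M *ᵥ v₀) := by
        rw [hAdef, ← mulVec_mulVec, dotProduct_mulVec, ← mulVec_transpose, transpose_transpose]
      rw [hdx]
      have h2 : (M *ᵥ v₀) ⬝ᵥ (M *ᵥ v₀)
          = ‖(WithLp.equiv 2 (Fin n → ℝ)).symm (M *ᵥ v₀)‖ ^ 2 := (gd_normE_sq _).symm
      have h3 : v₀ ⬝ᵥ v₀ = ‖(WithLp.equiv 2 (Fin d → ℝ)).symm v₀‖ ^ 2 := (gd_normE_sq _).symm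
      rw [h2, smul_eq_mul, h3, hv₀]
      ring
    have hker : (A - σd ^ 2 • (1 : Matrix (Fin d) (Fin d) ℝ)) *ᵥ v₀ = 0 := by
      apply (hBpsd.dotProduct_mulVec_zero_iff v₀).mp
      rw [star_trivial]; exact hquad
    have hAv : A *ᵥ v₀ = σd ^ 2 • v₀ := by
      have := hker
      rw [Matrix.sub_mulVec, sub_eq_zero, smul_mulVec, one_mulVec] at this
      exact this
    have hGTAv : Gᵀ *ᵥ (A *ᵥ v₀) = M *ᵥ v₀ := by
      rw [hGT, mulVec_mulVec, Matrix.mul_assoc, hAinvA, Matrix.mul_one]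
    have hnv₀ : 0 < ‖(WithLp.equiv 2 (Fin d → ℝ)).symm v₀‖ := by
      rw [norm_pos_iff]
      intro hcon
      apply hv₀ne
      have := congrArg (WithLp.equiv 2 (Fin d → ℝ)) hcon
      simpa using this
    have hlower : 1 / σd ≤ ‖G‖ := by
      have hb := gd_opNorm_mulVec Gᵀ (A *ᵥ v₀)
      rw [hGTAv, hAv, hGnorm] at hb
      have hsmul : ‖(WithLp.equiv 2 (Fin d → ℝ)).symm (σd ^ 2 • v₀)‖
          = σd ^ 2 * ‖(WithLp.equiv 2 (Fin d → ℝ)).symm v₀‖ := by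
        rw [show (WithLp.equiv 2 (Fin d → ℝ)).symm (σd ^ 2 • v₀)
            = σd ^ 2 • (WithLp.equiv 2 (Fin d → ℝ)).symm v₀ from rfl, norm_smul]
        simp [abs_of_pos (by positivity : (0:ℝ) < σd ^ 2)]
      rw [hsmul, hv₀] at hb
      have hGn : 0 ≤ ‖G‖ := norm_nonneg _
      rw [div_le_iff₀ hσd]
      nlinarith [mul_pos hσd hnv₀]
    exact le_antisymm hupper hlower
end
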